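/- Let k be a positive integer and let λ, μ : ℝ → ℝ satisfy: μ(0) = 1, μ is differentiable at 0 with μ'(0) = −k, and μ(z) − λ(z)^k = O(z²) as z → 0⁺. Then lim_{z→0⁺} |μ(z) − λ(z)^k| / (1 − |μ(z)|) = 0. -/

import Mathlib

open Filter Topology Asymptotics

/-- F-relaxation part of the paper's Corollary: if `μ(0) = 1`, `μ` is differentiable
at `0` with `μ'(0) = -k`, and `μ(z) - λ(z)^k = O(z²)` as `z → 0⁺`, then the
tight two-grid convergence bound `|μ(z) - λ(z)^k| / (1 - |μ(z)|)` tends to `0`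
as `z → 0⁺`. -/
theorem stmt_2 (k : ℕ) (hk : 0 < k) (lam μ : ℝ → ℝ)
    (hμ0 : μ 0 = 1)
    (hμd : HasDerivAt μ (-(k : ℝ)) 0)
    (hO : (fun z : ℝ => μ z - (lam z) ^ k) =O[𝓝[>] 0] fun z : ℝ => z ^ 2) :
    Tendsto (fun z : ℝ => |μ z - (lam z) ^ k| / (1 - |μ z|)) (𝓝[>] 0) (𝓝 0) := by
  have hk' : (0 : ℝ) < k := by exact_mod_cast hk
  -- continuity of μ at 0 from the right
  have hμc : Tendsto μ (𝓝[>] (0 : ℝ)) (𝓝 1) := by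
    have h := hμd.continuousAt.tendsto
    rw [hμ0] at h
    exact h.mono_left nhdsWithin_le_nhds
  have hpos : ∀ᶠ z in 𝓝[>] (0 : ℝ), (0 : ℝ) < μ z :=
    hμc.eventually (eventually_gt_nhds (by norm_num))
  -- slope tendsto
  have hsl : Tendsto (slope μ 0) (𝓝[≠] (0 : ℝ)) (𝓝 (-(k : ℝ))) :=
    hasDerivAt_iff_tendsto_slope.mp hμd
  have hsl' : Tendsto (slope μ 0) (𝓝[>] (0 : ℝ)) (𝓝 (-(k : ℝ))) :=
    hsl.mono_left (nhdsWithin_mono _ (fun x hx => ne_of_gt hx))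
  have hg : Tendsto (fun z => (1 - μ z) / z) (𝓝[>] (0 : ℝ)) (𝓝 (k : ℝ)) := by
    have h := hsl'.neg
    rw [neg_neg] at h
    refine h.congr (fun z => ?_)
    rw [slope_def_field, hμ0, sub_zero, ← neg_div, neg_sub]
  have hgpos : ∀ᶠ z in 𝓝[>] (0 : ℝ), 0 < (1 - μ z) / z :=
    hg.eventually (eventually_gt_nhds hk')
  obtain ⟨C, hC⟩ := hO.bound
  have hzpos : ∀ᶠ z in 𝓝[>] (0 : ℝ), 0 < z := self_mem_nhdsWithin
  -- upper bound tends to 0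
  have hU : Tendsto (fun z => (C * z) / ((1 - μ z) / z)) (𝓝[>] (0 : ℝ)) (𝓝 0) := by
    have h1 : Tendsto (fun z : ℝ => C * z) (𝓝[>] (0 : ℝ)) (𝓝 0) := by
      have h0 : Tendsto (fun z : ℝ => C * z) (𝓝 (0 : ℝ)) (𝓝 (C * 0)) :=
        (continuous_const.mul continuous_id).tendsto 0
      rw [mul_zero] at h0
      exact h0.mono_left nhdsWithin_le_nhds
    have := h1.div hg (ne_of_gt hk')
    rw [zero_div] at this
    exact this
  refine squeeze_zero' ?_ ?_ hU
  · filter_upwards [hpos, hgpos, hzpos] with z h1 h2 h3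
    have hD : 0 < 1 - |μ z| := by
      rw [abs_of_pos h1]
      have := mul_pos h2 h3
      calc (0:ℝ) < (1 - μ z) / z * z := this
        _ = 1 - μ z := div_mul_cancel₀ _ (ne_of_gt h3)
    exact div_nonneg (abs_nonneg _) hD.le
  · filter_upwards [hpos, hgpos, hzpos, hC] with z h1 h2 h3 h4
    have hzne : z ≠ 0 := ne_of_gt h3
    have hDeq : 1 - μ z = z * ((1 - μ z) / z) := (mul_div_cancel₀ _ hzne).symm
    have hD : 0 < 1 - μ z := by
      rw [hDeq]; exact mul_pos h3 h2
    rw [abs_of_pos h1]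
    have hb : |μ z - lam z ^ k| ≤ C * z ^ 2 := by
      have := h4
      simpa [abs_of_pos h3, sq_abs] using this
    calc |μ z - lam z ^ k| / (1 - μ z) ≤ (C * z ^ 2) / (1 - μ z) := by
          gcongr
      _ = (C * z) / ((1 - μ z) / z) := by
          rw [div_div_eq_mul_div, pow_two]; ring_nf
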